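/- In the setting where ℓ_1, ..., ℓ_n : ℝ^d → ℝ are convex, G-Lipschitz, L-smooth, μ, ν > 0, and Φ(w, λ) := Σ_{i=1}^n λ_i ℓ_i(w) + (μ/2)‖w‖₂² − (ν/2)‖λ − u_n‖₂² on ℝ^d × P(σ): the maps w*(λ) := argmin_{w ∈ ℝ^d} Φ(w, λ) and λ*(w) := argmax_{λ ∈ P(σ)} Φ(w, λ) are well-defined (unique), and satisfy ‖w*(λ₁) − w*(λ₂)‖₂ ≤ (√n·G/μ)‖λ₁ − λ₂‖₂ for all λ₁, λ₂ ∈ P(σ), and ‖λ*(w₁) − λ*(w₂)‖₂ ≤ (√n·G/ν)‖w₁ − w₂‖₂ for all w₁, w₂ ∈ ℝ^d. -/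

import Mathlib

open scoped NNReal
open scoped RealInnerProductSpace

section aux

lemma strongMin {E : Type*} [NormedAddCommGroup E] [InnerProductSpace ℝ E]
    {s : Set E} (hs : Convex ℝ s) {g : E → ℝ} (hg : ConvexOn ℝ s g)
    {m : ℝ} (hm : 0 ≤ m) {x : E} (hx : x ∈ s)
    (hmin : IsMinOn (fun y => g y + m / 2 * ‖y‖ ^ 2) s x) :
    ∀ y ∈ s, g x + m / 2 * ‖x‖ ^ 2 + m / 2 * ‖y - x‖ ^ 2 ≤ g y + m / 2 * ‖y‖ ^ 2 := by
  intro y hy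
  set D := ‖y - x‖ ^ 2 with hD
  have hD0 : 0 ≤ D := by positivity
  have key : ∀ t : ℝ, 0 < t → t ≤ 1 →
      m / 2 * (1 - t) * D ≤ (g y + m / 2 * ‖y‖ ^ 2) - (g x + m / 2 * ‖x‖ ^ 2) := by
    intro t ht0 ht1
    have hz : (1 - t) • x + t • y ∈ s := hs hx hy (by linarith) ht0.le (by ring)
    have h1 : g ((1 - t) • x + t • y) ≤ (1 - t) * g x + t * g y :=
      hg.2 hx hy (by linarith) ht0.le (by ring)
    have h2 : ‖(1 - t) • x + t • y‖ ^ 2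
        = (1 - t) * ‖x‖ ^ 2 + t * ‖y‖ ^ 2 - t * (1 - t) * D := by
      have e1 : D = ‖y‖ ^ 2 - 2 * ⟪y, x⟫ + ‖x‖ ^ 2 := norm_sub_sq_real y x
      have e2 : ‖(1 - t) • x + t • y‖ ^ 2
          = ‖(1 - t) • x‖ ^ 2 + 2 * ⟪(1 - t) • x, t • y⟫ + ‖t • y‖ ^ 2 :=
        norm_add_sq_real _ _
      rw [e2, norm_smul, norm_smul, real_inner_smul_left, real_inner_smul_right,
        e1, real_inner_comm y x]
      have a1 : ‖(1 - t : ℝ)‖ = 1 - t := by rw [Real.norm_eq_abs, abs_of_nonneg]; linarith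
      have a2 : ‖(t : ℝ)‖ = t := by rw [Real.norm_eq_abs, abs_of_nonneg ht0.le]
      rw [a1, a2]
      ring
    have hF : g x + m / 2 * ‖x‖ ^ 2
        ≤ g ((1 - t) • x + t • y) + m / 2 * ‖(1 - t) • x + t • y‖ ^ 2 := hmin hz
    have h3 : m / 2 * (t * (1 - t)) * D
        ≤ t * ((g y + m / 2 * ‖y‖ ^ 2) - (g x + m / 2 * ‖x‖ ^ 2)) := by
      nlinarith [hF, h1, h2]
    have h4 : t * (m / 2 * (1 - t) * D)
        ≤ t * ((g y + m / 2 * ‖y‖ ^ 2) - (g x + m / 2 * ‖x‖ ^ 2)) := by linarith [h3]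
    exact le_of_mul_le_mul_left (by linarith) ht0
  have : m / 2 * D ≤ (g y + m / 2 * ‖y‖ ^ 2) - (g x + m / 2 * ‖x‖ ^ 2) := by
    refine le_of_forall_pos_le_add ?_
    intro ε hε
    set t := min 1 (ε / (m / 2 * D + 1)) with ht
    have hden : (0:ℝ) < m / 2 * D + 1 := by positivity
    have ht0 : 0 < t := lt_min one_pos (div_pos hε hden)
    have ht1 : t ≤ 1 := min_le_left _ _
    have h5 := key t ht0 ht1
    have h6 : t * (m / 2 * D) ≤ ε := by
      have h7 : t ≤ ε / (m / 2 * D + 1) := min_le_right _ _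
      have h8 : (ε / (m / 2 * D + 1)) * (m / 2 * D + 1) = ε := div_mul_cancel₀ _ hden.ne'
      nlinarith [mul_le_mul_of_nonneg_right h7 (by positivity : (0:ℝ) ≤ m / 2 * D)]
    nlinarith
  linarith

lemma esq {n : ℕ} (x : EuclideanSpace ℝ (Fin n)) : ‖x‖ ^ 2 = ∑ i, x i ^ 2 := by
  rw [EuclideanSpace.norm_eq, Real.sq_sqrt (by positivity)]
  exact Finset.sum_congr rfl fun i _ => by rw [Real.norm_eq_abs, sq_abs]

lemma l1_bound {n : ℕ} (a : EuclideanSpace ℝ (Fin n)) :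
    ∑ i, |a i| ≤ Real.sqrt n * ‖a‖ := by
  have h2 : ∑ i, |a i| ^ 2 = ‖a‖ ^ 2 := by
    rw [esq]; exact Finset.sum_congr rfl fun i _ => sq_abs _
  have h1 : (∑ i, |a i|) ^ 2 ≤ (n : ℝ) * ‖a‖ ^ 2 := by
    have h := sq_sum_le_card_mul_sum_sq (s := (Finset.univ : Finset (Fin n)))
      (f := fun i => |a i|)
    rw [Finset.card_univ, Fintype.card_fin, h2] at h
    exact h
  calc ∑ i, |a i| = Real.sqrt ((∑ i, |a i|) ^ 2) :=
        (Real.sqrt_sq (by positivity)).symm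
    _ ≤ Real.sqrt ((n : ℝ) * ‖a‖ ^ 2) := Real.sqrt_le_sqrt h1
    _ = Real.sqrt n * ‖a‖ := by
        rw [Real.sqrt_mul (by positivity), Real.sqrt_sq (norm_nonneg _)]

lemma sum_shift {n : ℕ} (la : Fin n → ℝ) (c : ℝ) :
    ∑ i, (la i - c) ^ 2 = (∑ i, la i ^ 2) - 2 * c * (∑ i, la i) + n * c ^ 2 := by
  have h : ∀ i : Fin n, (la i - c) ^ 2 = la i ^ 2 - 2 * c * la i + c ^ 2 := fun i => by ring
  simp_rw [h]
  rw [Finset.sum_add_distrib, Finset.sum_sub_distrib, ← Finset.mul_sum, Finset.sum_const,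
    Finset.card_univ, Fintype.card_fin, nsmul_eq_mul]

lemma affine_convexOn {n : ℕ} {s : Set (EuclideanSpace ℝ (Fin n))} (hs : Convex ℝ s)
    (c : Fin n → ℝ) (b : ℝ) : ConvexOn ℝ s (fun x => ∑ i, x i * c i + b) := by
  refine ⟨hs, fun x _ y _ a b' ha hb hab => le_of_eq ?_⟩
  have happ : ∀ i, (a • x + b' • y) i = a * x i + b' * y i := fun i => by
    simp [PiLp.add_apply, PiLp.smul_apply, smul_eq_mul]
  simp only [happ, smul_eq_mul]
  have h1 : ∑ i, (a * x i + b' * y i) * c i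
      = ∑ i, (a * (x i * c i) + b' * (y i * c i)) :=
    Finset.sum_congr rfl fun i _ => by ring
  rw [h1, Finset.sum_add_distrib, ← Finset.mul_sum, ← Finset.mul_sum]
  have : a * (∑ i, x i * c i + b) + b' * (∑ i, y i * c i + b)
      = a * ∑ i, x i * c i + b' * ∑ i, y i * c i + (a + b') * b := by ring
  rw [this, hab, one_mul]

end aux

def permutahedronE {n : ℕ} (σ : Fin n → ℝ) : Set (EuclideanSpace ℝ (Fin n)) :=
  {lam | ∃ P : Matrix (Fin n) (Fin n) ℝ,
    (∀ i j, P i j ∈ Set.Icc (0 : ℝ) 1) ∧ (∀ i, ∑ j, P i j = 1) ∧ (∀ j, ∑ i, P i j = 1) ∧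
    ∀ i, lam i = ∑ j, P i j * σ j}

noncomputable def Phi {d n : ℕ} (ℓ : Fin n → EuclideanSpace ℝ (Fin d) → ℝ) (μ ν : ℝ)
    (w : EuclideanSpace ℝ (Fin d)) (lam : EuclideanSpace ℝ (Fin n)) : ℝ :=
  (∑ i, lam i * ℓ i w) + μ / 2 * ‖w‖ ^ 2 - ν / 2 * ∑ i, (lam i - 1 / n) ^ 2

section perm

variable {n : ℕ} {σ : Fin n → ℝ}

lemma perm_nonneg (hσ : ∀ i, 0 ≤ σ i)
    {lam : EuclideanSpace ℝ (Fin n)} (h : lam ∈ permutahedronE σ) : ∀ i, 0 ≤ lam i := by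
  obtain ⟨P, hP1, _, _, hP4⟩ := h
  intro i
  rw [hP4 i]
  exact Finset.sum_nonneg fun j _ => mul_nonneg (hP1 i j).1 (hσ j)

lemma perm_sum (hσ_sum : ∑ i, σ i = 1)
    {lam : EuclideanSpace ℝ (Fin n)} (h : lam ∈ permutahedronE σ) : ∑ i, lam i = 1 := by
  obtain ⟨P, _, _, hP3, hP4⟩ := h
  calc ∑ i, lam i = ∑ i, ∑ j, P i j * σ j := by simp_rw [hP4]
    _ = ∑ j, (∑ i, P i j) * σ j := by rw [Finset.sum_comm]; simp_rw [Finset.sum_mul]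
    _ = 1 := by simp_rw [hP3, one_mul, hσ_sum]

lemma perm_self_mem (σ : Fin n → ℝ) :
    (WithLp.toLp 2 σ : EuclideanSpace ℝ (Fin n)) ∈ permutahedronE σ := by
  refine ⟨1, ?_, ?_, ?_, ?_⟩
  · intro i j
    rw [Matrix.one_apply]
    split <;> constructor <;> norm_num
  · intro i; simp [Matrix.one_apply]
  · intro j; simp [Matrix.one_apply]
  · intro i; simp [Matrix.one_apply, Finset.sum_ite_eq]

lemma perm_convex (σ : Fin n → ℝ) : Convex ℝ (permutahedronE σ) := by
  rintro lam ⟨P, hP1, hP2, hP3, hP4⟩ lam' ⟨Q, hQ1, hQ2, hQ3, hQ4⟩ a b ha hb hab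
  refine ⟨fun i j => a * P i j + b * Q i j, ?_, ?_, ?_, ?_⟩
  · intro i j
    obtain ⟨h1, h2⟩ := hP1 i j
    obtain ⟨h3, h4⟩ := hQ1 i j
    simp only [Set.mem_Icc]
    constructor
    · positivity
    · nlinarith
  · intro i
    rw [Finset.sum_add_distrib, ← Finset.mul_sum, ← Finset.mul_sum, hP2, hQ2]; linarith
  · intro j
    rw [Finset.sum_add_distrib, ← Finset.mul_sum, ← Finset.mul_sum, hP3, hQ3]; linarith
  · intro i
    have : (a • lam + b • lam') i = a * lam i + b * lam' i := by
      simp [PiLp.add_apply, PiLp.smul_apply, smul_eq_mul]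
    rw [this, hP4 i, hQ4 i, Finset.mul_sum, Finset.mul_sum, ← Finset.sum_add_distrib]
    exact Finset.sum_congr rfl fun j _ => by ring

lemma perm_compact (σ : Fin n → ℝ) : IsCompact (permutahedronE σ) := by
  set M : Set (Matrix (Fin n) (Fin n) ℝ) :=
    {P | (∀ i j, P i j ∈ Set.Icc (0 : ℝ) 1) ∧ (∀ i, ∑ j, P i j = 1) ∧ (∀ j, ∑ i, P i j = 1)}
  have happ : ∀ i j : Fin n, Continuous fun P : Matrix (Fin n) (Fin n) ℝ => P i j :=
    fun i j => (continuous_apply j).comp (continuous_apply i)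
  have hK : IsCompact {P : Matrix (Fin n) (Fin n) ℝ | ∀ i j, P i j ∈ Set.Icc (0 : ℝ) 1} := by
    have : {P : Matrix (Fin n) (Fin n) ℝ | ∀ i j, P i j ∈ Set.Icc (0 : ℝ) 1} =
        Set.univ.pi (fun _ : Fin n => Set.univ.pi fun _ : Fin n => Set.Icc (0:ℝ) 1) := by
      ext P
      constructor
      · exact fun h => Set.mem_univ_pi.mpr fun i => Set.mem_univ_pi.mpr fun j => h i j
      · exact fun h i j => Set.mem_univ_pi.mp (Set.mem_univ_pi.mp h i) j
    rw [this]
    exact isCompact_univ_pi fun i => isCompact_univ_pi fun j => isCompact_Icc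
  have hMclosed : IsClosed M := by
    have h1 : IsClosed {P : Matrix (Fin n) (Fin n) ℝ | ∀ i j, P i j ∈ Set.Icc (0 : ℝ) 1} := by
      have : {P : Matrix (Fin n) (Fin n) ℝ | ∀ i j, P i j ∈ Set.Icc (0 : ℝ) 1} =
          ⋂ i, ⋂ j, (fun P : Matrix (Fin n) (Fin n) ℝ => P i j) ⁻¹' Set.Icc 0 1 := by
        ext P; simp
      rw [this]
      exact isClosed_iInter fun i => isClosed_iInter fun j =>
        IsClosed.preimage (happ i j) isClosed_Icc
    have h2 : IsClosed {P : Matrix (Fin n) (Fin n) ℝ | ∀ i, ∑ j, P i j = 1} := by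
      have : {P : Matrix (Fin n) (Fin n) ℝ | ∀ i, ∑ j, P i j = 1} =
          ⋂ i, {P : Matrix (Fin n) (Fin n) ℝ | ∑ j, P i j = 1} := by ext P; simp
      rw [this]
      exact isClosed_iInter fun i =>
        isClosed_eq (continuous_finset_sum _ fun j _ => happ i j) continuous_const
    have h3 : IsClosed {P : Matrix (Fin n) (Fin n) ℝ | ∀ j, ∑ i, P i j = 1} := by
      have : {P : Matrix (Fin n) (Fin n) ℝ | ∀ j, ∑ i, P i j = 1} =
          ⋂ j, {P : Matrix (Fin n) (Fin n) ℝ | ∑ i, P i j = 1} := by ext P; simp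
      rw [this]
      exact isClosed_iInter fun j =>
        isClosed_eq (continuous_finset_sum _ fun i _ => happ i j) continuous_const
    have : M = _ ∩ (_ ∩ _) := rfl
    exact h1.inter (h2.inter h3)
  have hM : IsCompact M := hK.of_isClosed_subset hMclosed fun P hP => hP.1
  have himg : permutahedronE σ =
      (fun P : Matrix (Fin n) (Fin n) ℝ =>
        (WithLp.toLp 2 (fun i => ∑ j, P i j * σ j) : EuclideanSpace ℝ (Fin n))) '' M := by
    ext lam
    constructor
    · rintro ⟨P, h1, h2, h3, h4⟩
      exact ⟨P, ⟨h1, h2, h3⟩, by ext i; exact (h4 i).symm⟩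
    · rintro ⟨P, ⟨h1, h2, h3⟩, rfl⟩
      exact ⟨P, h1, h2, h3, fun i => rfl⟩
  rw [himg]
  apply hM.image
  have : Continuous fun P : Matrix (Fin n) (Fin n) ℝ =>
      ((fun i => ∑ j, P i j * σ j) : Fin n → ℝ) :=
    continuous_pi fun i => continuous_finset_sum _ fun j _ => (happ i j).mul continuous_const
  exact (PiLp.continuous_toLp 2 fun _ : Fin n => ℝ).comp this

end perm

/-- For convex, `G`-Lipschitz, `L`-smooth losses and `μ, ν > 0`, the maps
`w*(λ) = argmin_w Φ(w, λ)` and `λ*(w) = argmax_{λ ∈ P(σ)} Φ(w, λ)` are well-defined (unique)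
and are respectively `(√n G/μ)`- and `(√n G/ν)`-Lipschitz. -/
theorem stmt18 {d n : ℕ}
    (ℓ : Fin n → EuclideanSpace ℝ (Fin d) → ℝ)
    (hconv : ∀ i, ConvexOn ℝ Set.univ (ℓ i))
    (G : ℝ≥0) (hlip : ∀ i, LipschitzWith G (ℓ i))
    (gradℓ : Fin n → EuclideanSpace ℝ (Fin d) → EuclideanSpace ℝ (Fin d))
    (hgrad : ∀ i w, HasGradientAt (ℓ i) (gradℓ i w) w)
    (L : ℝ≥0) (hsmooth : ∀ i, LipschitzWith L (gradℓ i))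
    (μ ν : ℝ) (hμ : 0 < μ) (hν : 0 < ν)
    (σ : Fin n → ℝ) (hσ_nonneg : ∀ i, 0 ≤ σ i) (hσ_sum : ∑ i, σ i = 1) :
    (∀ lam ∈ permutahedronE σ,
      ∃! w : EuclideanSpace ℝ (Fin d), IsMinOn (fun w' => Phi ℓ μ ν w' lam) Set.univ w) ∧
    (∀ w : EuclideanSpace ℝ (Fin d),
      ∃! lam, lam ∈ permutahedronE σ ∧
        IsMaxOn (fun lam' => Phi ℓ μ ν w lam') (permutahedronE σ) lam) ∧
    (∀ lam₁ ∈ permutahedronE σ, ∀ lam₂ ∈ permutahedronE σ,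
      ∀ w₁ w₂ : EuclideanSpace ℝ (Fin d),
        IsMinOn (fun w' => Phi ℓ μ ν w' lam₁) Set.univ w₁ →
        IsMinOn (fun w' => Phi ℓ μ ν w' lam₂) Set.univ w₂ →
        ‖w₁ - w₂‖ ≤ Real.sqrt n * (G : ℝ) / μ * ‖lam₁ - lam₂‖) ∧
    (∀ w₁ w₂ : EuclideanSpace ℝ (Fin d), ∀ lam₁ lam₂ : EuclideanSpace ℝ (Fin n),
      lam₁ ∈ permutahedronE σ →
      IsMaxOn (fun lam' => Phi ℓ μ ν w₁ lam') (permutahedronE σ) lam₁ →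
      lam₂ ∈ permutahedronE σ →
      IsMaxOn (fun lam' => Phi ℓ μ ν w₂ lam') (permutahedronE σ) lam₂ →
      ‖lam₁ - lam₂‖ ≤ Real.sqrt n * (G : ℝ) / ν * ‖w₁ - w₂‖) := by
  -- convexity of w ↦ ∑ λ_i ℓ_i w + C for λ in the permutahedron
  have hg1conv : ∀ lam ∈ permutahedronE σ, ∀ C : ℝ,
      ConvexOn ℝ (Set.univ : Set (EuclideanSpace ℝ (Fin d)))
        (fun w => (∑ i, lam i * ℓ i w) + C) := by
    intro lam hlam C
    have hlamn := perm_nonneg hσ_nonneg hlam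
    refine ⟨convex_univ, fun x _ y _ a b ha hb hab => ?_⟩
    have hsum : ∑ i, lam i * ℓ i (a • x + b • y)
        ≤ ∑ i, (a * (lam i * ℓ i x) + b * (lam i * ℓ i y)) := by
      refine Finset.sum_le_sum fun i _ => ?_
      have h := (hconv i).2 (Set.mem_univ x) (Set.mem_univ y) ha hb hab
      simp only [smul_eq_mul] at h
      calc lam i * ℓ i (a • x + b • y) ≤ lam i * (a * ℓ i x + b * ℓ i y) :=
            mul_le_mul_of_nonneg_left h (hlamn i)
        _ = a * (lam i * ℓ i x) + b * (lam i * ℓ i y) := by ring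
    rw [Finset.sum_add_distrib, ← Finset.mul_sum, ← Finset.mul_sum] at hsum
    simp only [smul_eq_mul]
    calc (∑ i, lam i * ℓ i (a • x + b • y)) + C
        ≤ (a * ∑ i, lam i * ℓ i x + b * ∑ i, lam i * ℓ i y) + C := by linarith
      _ = a * ((∑ i, lam i * ℓ i x) + C) + b * ((∑ i, lam i * ℓ i y) + C) := by
          have : a * ((∑ i, lam i * ℓ i x) + C) + b * ((∑ i, lam i * ℓ i y) + C)
              = a * ∑ i, lam i * ℓ i x + b * ∑ i, lam i * ℓ i y + (a + b) * C := by ring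
          rw [this, hab, one_mul]
  -- strong minimality inequality in w
  have minStrong : ∀ lam ∈ permutahedronE σ, ∀ x : EuclideanSpace ℝ (Fin d),
      IsMinOn (fun w' => Phi ℓ μ ν w' lam) Set.univ x →
      ∀ y : EuclideanSpace ℝ (Fin d),
        Phi ℓ μ ν x lam + μ / 2 * ‖y - x‖ ^ 2 ≤ Phi ℓ μ ν y lam := by
    intro lam hlam x hmin y
    set C : ℝ := -(ν / 2 * ∑ i, (lam i - 1 / n) ^ 2) with hC
    have heq : ∀ w' : EuclideanSpace ℝ (Fin d),
        ((∑ i, lam i * ℓ i w') + C) + μ / 2 * ‖w'‖ ^ 2 = Phi ℓ μ ν w' lam := by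
      intro w'; simp only [Phi, hC]; ring
    have hmin' : IsMinOn (fun w' => ((∑ i, lam i * ℓ i w') + C) + μ / 2 * ‖w'‖ ^ 2)
        Set.univ x := by
      refine isMinOn_iff.mpr fun y' hy' => ?_
      rw [heq, heq]
      exact isMinOn_iff.mp hmin y' hy'
    have := strongMin convex_univ (hg1conv lam hlam C) (le_of_lt hμ) (Set.mem_univ x) hmin'
      y (Set.mem_univ y)
    rw [heq, heq] at this
    linarith
  -- strong maximality inequality in λ
  have maxStrong : ∀ w : EuclideanSpace ℝ (Fin d), ∀ lam ∈ permutahedronE σ,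
      IsMaxOn (fun lam' => Phi ℓ μ ν w lam') (permutahedronE σ) lam →
      ∀ lam' ∈ permutahedronE σ,
        Phi ℓ μ ν w lam' + ν / 2 * ‖lam' - lam‖ ^ 2 ≤ Phi ℓ μ ν w lam := by
    intro w lam hlam hmax lam' hlam'
    set c : Fin n → ℝ := fun i => -(ℓ i w) - ν * (1 / n) with hc
    set K : ℝ := ν / 2 * ((n : ℝ) * (1 / n) ^ 2) - μ / 2 * ‖w‖ ^ 2 with hK
    have heq : ∀ la : EuclideanSpace ℝ (Fin n),
        ((∑ i, la i * c i) + K) + ν / 2 * ‖la‖ ^ 2 = -Phi ℓ μ ν w la := by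
      intro la
      have h1 : ∑ i, la i * c i
          = -(∑ i, la i * ℓ i w) - ν * (1 / n) * (∑ i, la i) := by
        have h2 : ∑ i, la i * c i
            = ∑ i, (-(la i * ℓ i w) - la i * (ν * (1 / n))) :=
          Finset.sum_congr rfl fun i _ => by rw [hc]; ring
        rw [h2, Finset.sum_sub_distrib, Finset.sum_neg_distrib, ← Finset.sum_mul]
        ring
      simp only [Phi, hK]
      rw [h1, esq la, sum_shift (fun i => la i) (1 / n)]
      ring
    have hmin' : IsMinOn (fun la => ((∑ i, la i * c i) + K) + ν / 2 * ‖la‖ ^ 2)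
        (permutahedronE σ) lam := by
      refine isMinOn_iff.mpr fun la hla => ?_
      rw [heq, heq]
      exact neg_le_neg (hmax hla)
    have := strongMin (perm_convex σ) (affine_convexOn (perm_convex σ) c K)
      (le_of_lt hν) hlam hmin' lam' hlam'
    rw [heq, heq] at this
    linarith
  -- the cancellation identity
  have cancel : ∀ (wa wb : EuclideanSpace ℝ (Fin d)) (la lb : EuclideanSpace ℝ (Fin n)),
      Phi ℓ μ ν wb la + Phi ℓ μ ν wa lb - Phi ℓ μ ν wa la - Phi ℓ μ ν wb lb
        = ∑ i, (la i - lb i) * (ℓ i wb - ℓ i wa) := by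
    intro wa wb la lb
    have h : ∑ i, (la i - lb i) * (ℓ i wb - ℓ i wa)
        = (∑ i, la i * ℓ i wb) + (∑ i, lb i * ℓ i wa)
          - (∑ i, la i * ℓ i wa) - (∑ i, lb i * ℓ i wb) := by
      rw [← Finset.sum_add_distrib, ← Finset.sum_sub_distrib, ← Finset.sum_sub_distrib]
      exact Finset.sum_congr rfl fun i _ => by ring
    rw [h]
    simp only [Phi]
    ring
  -- the cross-term bound
  have bound : ∀ (wa wb : EuclideanSpace ℝ (Fin d)) (la lb : EuclideanSpace ℝ (Fin n)),
      ∑ i, (la i - lb i) * (ℓ i wb - ℓ i wa)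
        ≤ Real.sqrt n * ‖la - lb‖ * ((G : ℝ) * ‖wb - wa‖) := by
    intro wa wb la lb
    have step1 : ∑ i, (la i - lb i) * (ℓ i wb - ℓ i wa)
        ≤ ∑ i, |la i - lb i| * ((G : ℝ) * ‖wb - wa‖) := by
      refine Finset.sum_le_sum fun i _ => ?_
      have h1 : |ℓ i wb - ℓ i wa| ≤ (G : ℝ) * ‖wb - wa‖ := by
        have := (hlip i).dist_le_mul wb wa
        rwa [Real.dist_eq, dist_eq_norm] at this
      calc (la i - lb i) * (ℓ i wb - ℓ i wa)
          ≤ |la i - lb i| * |ℓ i wb - ℓ i wa| := by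
            rw [← abs_mul]; exact le_abs_self _
        _ ≤ |la i - lb i| * ((G : ℝ) * ‖wb - wa‖) :=
            mul_le_mul_of_nonneg_left h1 (abs_nonneg _)
    have step2 : ∑ i, |la i - lb i| ≤ Real.sqrt n * ‖la - lb‖ := by
      have h : ∀ i, |la i - lb i| = |(la - lb) i| := fun i => by rw [PiLp.sub_apply]
      simp_rw [h]
      exact l1_bound (la - lb)
    calc ∑ i, (la i - lb i) * (ℓ i wb - ℓ i wa)
        ≤ ∑ i, |la i - lb i| * ((G : ℝ) * ‖wb - wa‖) := step1
      _ = (∑ i, |la i - lb i|) * ((G : ℝ) * ‖wb - wa‖) := by rw [Finset.sum_mul]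
      _ ≤ Real.sqrt n * ‖la - lb‖ * ((G : ℝ) * ‖wb - wa‖) :=
          mul_le_mul_of_nonneg_right step2 (by positivity)
  refine ⟨?_, ?_, ?_, ?_⟩
  · -- existence and uniqueness of the minimizer in w
    intro lam hlam
    have hlamn := perm_nonneg hσ_nonneg hlam
    have hlams := perm_sum hσ_sum hlam
    set f : EuclideanSpace ℝ (Fin d) → ℝ := fun w' => Phi ℓ μ ν w' lam with hf
    have hcont : Continuous f := by
      refine Continuous.sub (Continuous.add ?_ ?_) continuous_const
      · exact continuous_finset_sum _ fun i _ => continuous_const.mul (hlip i).continuous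
      · exact continuous_const.mul (continuous_norm.pow 2)
    set B : ℝ := (∑ i, lam i * ℓ i 0) - ν / 2 * ∑ i, (lam i - 1 / n) ^ 2 with hB
    have lower : ∀ w' : EuclideanSpace ℝ (Fin d),
        μ / 2 * ‖w'‖ ^ 2 - (G : ℝ) * ‖w'‖ + B ≤ f w' := by
      intro w'
      have hterm : ∀ i, lam i * ℓ i 0 - lam i * ((G : ℝ) * ‖w'‖) ≤ lam i * ℓ i w' := by
        intro i
        have h1 : |ℓ i 0 - ℓ i w'| ≤ (G : ℝ) * ‖w'‖ := by
          have := (hlip i).dist_le_mul 0 w'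
          rw [Real.dist_eq, dist_eq_norm, zero_sub, norm_neg] at this
          exact this
        have h2 : ℓ i 0 - (G : ℝ) * ‖w'‖ ≤ ℓ i w' := by
          have := (abs_le.mp h1).2
          linarith
        have := mul_le_mul_of_nonneg_left h2 (hlamn i)
        calc lam i * ℓ i 0 - lam i * ((G : ℝ) * ‖w'‖)
            = lam i * (ℓ i 0 - (G : ℝ) * ‖w'‖) := by ring
          _ ≤ lam i * ℓ i w' := this
      have hsum := Finset.sum_le_sum fun i (_ : i ∈ Finset.univ) => hterm i
      rw [Finset.sum_sub_distrib, ← Finset.sum_mul] at hsum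
      rw [hlams, one_mul] at hsum
      simp only [hf, Phi, hB]
      linarith
    have hlim : Filter.Tendsto f (Filter.cocompact _) Filter.atTop := by
      have h1 : Filter.Tendsto (fun r : ℝ => μ / 2 * r ^ 2 - (G : ℝ) * r + B)
          Filter.atTop Filter.atTop := by
        have h2 : Filter.Tendsto (fun r : ℝ => r * (μ / 2 * r - (G : ℝ)))
            Filter.atTop Filter.atTop := by
          refine Filter.Tendsto.atTop_mul_atTop₀ Filter.tendsto_id ?_
          exact Filter.tendsto_atTop_add_const_right _ _
            (Filter.Tendsto.const_mul_atTop (by linarith) Filter.tendsto_id)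
        have h3 : (fun r : ℝ => μ / 2 * r ^ 2 - (G : ℝ) * r + B)
            = fun r : ℝ => r * (μ / 2 * r - (G : ℝ)) + B := by
          funext r; ring
        rw [h3]
        exact Filter.tendsto_atTop_add_const_right _ _ h2
      exact Filter.tendsto_atTop_mono lower (h1.comp tendsto_norm_cocompact_atTop)
    obtain ⟨x, hx⟩ := hcont.exists_forall_le hlim
    have hxmin : IsMinOn f Set.univ x := isMinOn_iff.mpr fun y _ => hx y
    refine ⟨x, hxmin, fun y hy => ?_⟩
    have h1 := minStrong lam hlam x hxmin y
    have h2 : f y ≤ f x := isMinOn_iff.mp hy x (Set.mem_univ x)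
    have h3 : ‖y - x‖ ^ 2 ≤ 0 := by
      simp only [hf] at h1 h2
      nlinarith
    have h4 : ‖y - x‖ = 0 := by nlinarith [norm_nonneg (y - x)]
    have := norm_eq_zero.mp h4
    exact sub_eq_zero.mp this
  · -- existence and uniqueness of the maximizer in λ
    intro w
    have hne : (permutahedronE σ).Nonempty := ⟨WithLp.toLp 2 σ, perm_self_mem σ⟩
    have hcont : ContinuousOn (fun lam' => Phi ℓ μ ν w lam') (permutahedronE σ) := by
      refine Continuous.continuousOn ?_
      refine Continuous.sub (Continuous.add ?_ continuous_const) ?_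
      · exact continuous_finset_sum _ fun i _ =>
          ((EuclideanSpace.proj (𝕜 := ℝ) i).continuous).mul continuous_const
      · exact continuous_const.mul (continuous_finset_sum _ fun i _ =>
          (((EuclideanSpace.proj (𝕜 := ℝ) i).continuous).sub continuous_const).pow 2)
    obtain ⟨lam, hlam, hmax⟩ := (perm_compact σ).exists_isMaxOn hne hcont
    refine ⟨lam, ⟨hlam, hmax⟩, ?_⟩
    rintro lam' ⟨hlam', hmax'⟩
    have h1 := maxStrong w lam hlam hmax lam' hlam'
    have h2 : Phi ℓ μ ν w lam ≤ Phi ℓ μ ν w lam' := hmax' hlam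
    have h3 : ‖lam' - lam‖ ^ 2 ≤ 0 := by nlinarith
    have h4 : ‖lam' - lam‖ = 0 := by nlinarith [norm_nonneg (lam' - lam)]
    exact sub_eq_zero.mp (norm_eq_zero.mp h4)
  · -- Lipschitzness of the argmin map
    intro lam₁ hlam₁ lam₂ hlam₂ w₁ w₂ hmin₁ hmin₂
    have h1 := minStrong lam₁ hlam₁ w₁ hmin₁ w₂
    have h2 := minStrong lam₂ hlam₂ w₂ hmin₂ w₁
    have hc := cancel w₁ w₂ lam₁ lam₂
    have hb := bound w₁ w₂ lam₁ lam₂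
    have hrev : ‖w₂ - w₁‖ = ‖w₁ - w₂‖ := norm_sub_rev w₂ w₁
    have hrevsq : ‖w₂ - w₁‖ ^ 2 = ‖w₁ - w₂‖ ^ 2 := by rw [hrev]
    have hkey : μ * ‖w₁ - w₂‖ ^ 2 ≤ Real.sqrt n * (G : ℝ) * ‖lam₁ - lam₂‖ * ‖w₁ - w₂‖ := by
      rw [hrev] at hb
      have e3 : μ * ‖w₂ - w₁‖ ^ 2 = μ * ‖w₁ - w₂‖ ^ 2 := by rw [hrevsq]
      linarith [h1, h2, hc, hb, e3]
    rcases eq_or_lt_of_le (norm_nonneg (w₁ - w₂)) with h0 | hpos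
    · rw [← h0]
      positivity
    · have hgoal : ‖w₁ - w₂‖ * μ ≤ Real.sqrt n * (G : ℝ) * ‖lam₁ - lam₂‖ := by
        refine le_of_mul_le_mul_right ?_ hpos
        nlinarith
      rw [div_mul_eq_mul_div, le_div_iff₀ hμ]
      linarith
  · -- Lipschitzness of the argmax map
    intro w₁ w₂ lam₁ lam₂ hlam₁ hmax₁ hlam₂ hmax₂
    have h1 := maxStrong w₁ lam₁ hlam₁ hmax₁ lam₂ hlam₂
    have h2 := maxStrong w₂ lam₂ hlam₂ hmax₂ lam₁ hlam₁
    have hc := cancel w₂ w₁ lam₁ lam₂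
    have hb := bound w₂ w₁ lam₁ lam₂
    have hrev : ‖lam₂ - lam₁‖ = ‖lam₁ - lam₂‖ := norm_sub_rev lam₂ lam₁
    have hrev2 : ‖lam₁ - lam₂‖ = ‖lam₂ - lam₁‖ := norm_sub_rev lam₁ lam₂
    have hrevsq : ‖lam₂ - lam₁‖ ^ 2 = ‖lam₁ - lam₂‖ ^ 2 := by rw [hrev]
    have hkey : ν * ‖lam₁ - lam₂‖ ^ 2
        ≤ Real.sqrt n * ‖lam₁ - lam₂‖ * ((G : ℝ) * ‖w₁ - w₂‖) := by
      have e3 : ν * ‖lam₂ - lam₁‖ ^ 2 = ν * ‖lam₁ - lam₂‖ ^ 2 := by rw [hrevsq]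
      linarith [h1, h2, hc, hb, e3]
    rcases eq_or_lt_of_le (norm_nonneg (lam₁ - lam₂)) with h0 | hpos
    · rw [← h0]
      positivity
    · have hgoal : ‖lam₁ - lam₂‖ * ν ≤ Real.sqrt n * (G : ℝ) * ‖w₁ - w₂‖ := by
        refine le_of_mul_le_mul_right ?_ hpos
        nlinarith
      rw [div_mul_eq_mul_div, le_div_iff₀ hν]
      linarith
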